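/- (Comparison Theorem, uniqueness part.) Let C be a category, P = (P_n)_{n ≥ −1} an augmented simplicial object of C with P_{−1} = X, and A = (A_n)_{n ≥ −1} an augmented simplicial object of C with A_{−1} = Y, such that for every i ≥ 0 the augmented simplicial set Hom(Pᵢ, A) is contractible and Kan. If f, g : P → A are two semi-simplicial maps both extending the same morphism X → Y (i.e., f_{−1} = g_{−1}), then f and g are simplicially homotopic. -/

import Mathlib

namespace Statement7

open CategoryTheory

variable {C : Type*} [Category C]

/-- An augmented simplicial object `A = (Aₙ)_{n ≥ -1}` in a category `C`:
`obj n = Aₙ` for `n ≥ 0`, `pt = A₋₁`, face operators `d n i : Aₙ₊₁ ⟶ Aₙ`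
(meaningful for `i ≤ n + 1`), degeneracy operators `s n i : Aₙ ⟶ Aₙ₊₁`
(meaningful for `i ≤ n`), and augmentation `aug : A₀ ⟶ A₋₁`, subject to the
simplicial identities. -/
structure AugSimp (C : Type*) [Category C] where
  obj : ℕ → C
  pt : C
  d : (n i : ℕ) → (obj (n + 1) ⟶ obj n)
  s : (n i : ℕ) → (obj n ⟶ obj (n + 1))
  aug : obj 0 ⟶ pt
  dd : ∀ n i j, i < j → j ≤ n + 2 →
    d (n + 1) j ≫ d n i = d (n + 1) i ≫ d n (j - 1)
  daug : d 0 0 ≫ aug = d 0 1 ≫ aug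
  ds_lt : ∀ n i j, i < j → j ≤ n + 1 →
    s (n + 1) j ≫ d (n + 1) i = d n i ≫ s n (j - 1)
  ds_eq : ∀ n i, i ≤ n → s n i ≫ d n i = 𝟙 (obj n)
  ds_eq' : ∀ n i, i ≤ n → s n i ≫ d n (i + 1) = 𝟙 (obj n)
  ds_gt : ∀ n i j, j + 1 < i → i ≤ n + 2 →
    s (n + 1) j ≫ d (n + 1) i = d n (i - 1) ≫ s n j
  ss : ∀ n i j, i ≤ j → j ≤ n →
    s n j ≫ s (n + 1) i = s n i ≫ s (n + 1) (j + 1)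

/-- The augmented simplicial set `Hom(P, A)` is contractible: it admits a contraction,
i.e. maps `hₙ : Hom(P, Aₙ) → Hom(P, Aₙ₊₁)` for `n ≥ -1` with `∂₀ hₙ = 1` and
`∂ᵢ hₙ = hₙ₋₁ ∂ᵢ₋₁` for `i > 0`. -/
def AugSimp.ContractibleAt (A : AugSimp C) (P : C) : Prop :=
  ∃ (hm : (P ⟶ A.pt) → (P ⟶ A.obj 0))
    (h : (n : ℕ) → (P ⟶ A.obj n) → (P ⟶ A.obj (n + 1))),
    (∀ x : P ⟶ A.pt, hm x ≫ A.aug = x) ∧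
    (∀ (n : ℕ) (x : P ⟶ A.obj n), h n x ≫ A.d n 0 = x) ∧
    (∀ x : P ⟶ A.obj 0, h 0 x ≫ A.d 0 1 = hm (x ≫ A.aug)) ∧
    (∀ (n : ℕ) (x : P ⟶ A.obj (n + 1)) (i : ℕ), 1 ≤ i → i ≤ n + 2 →
      h (n + 1) x ≫ A.d (n + 1) i = h n (x ≫ A.d n (i - 1)))

/-- The simplicial set `Hom(P, A)` is Kan: every `(n, k)`-horn has a filler.
The first clause treats horns of dimension `1`, the second those of dimension `≥ 2`. -/
def AugSimp.KanAt (A : AugSimp C) (P : C) : Prop :=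
  (∀ k, k ≤ 1 → ∀ a : ℕ → (P ⟶ A.obj 0),
    ∃ b : P ⟶ A.obj 1, ∀ i, i ≤ 1 → i ≠ k → b ≫ A.d 0 i = a i) ∧
  (∀ (n k : ℕ), k ≤ n + 2 → ∀ a : ℕ → (P ⟶ A.obj (n + 1)),
    (∀ i j, i < j → j ≤ n + 2 → i ≠ k → j ≠ k →
      a j ≫ A.d n i = a i ≫ A.d n (j - 1)) →
    ∃ b : P ⟶ A.obj (n + 2), ∀ i, i ≤ n + 2 → i ≠ k → b ≫ A.d (n + 1) i = a i)

/-! ### Auxiliary machinery for the comparison theorem -/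

section Aux

variable (P A : AugSimp C)

/-- Filling a 0-sphere (a pair of points with equal augmentation) in a
contractible Kan `Hom(P, A)`. -/
lemma sphere0 {X : C} (hc : A.ContractibleAt X) (hk : A.KanAt X)
    (a0 a1 : X ⟶ A.obj 0) (hcom : a1 ≫ A.aug = a0 ≫ A.aug) :
    ∃ b : X ⟶ A.obj 1, b ≫ A.d 0 0 = a0 ∧ b ≫ A.d 0 1 = a1 := by
  obtain ⟨hm, h, H1, H2, H3, H4⟩ := hc
  have kan := hk.2
  have hcomp : ∀ i j, i < j → j ≤ 0 + 2 → i ≠ 0 → j ≠ 0 →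
      (if j = 1 then h 0 a0 else h 0 a1) ≫ A.d 0 i
        = (if i = 1 then h 0 a0 else h 0 a1) ≫ A.d 0 (j - 1) := by
    intro i j hij hj hi0 hj0
    obtain rfl : i = 1 := by omega
    obtain rfl : j = 2 := by omega
    norm_num
    rw [H3, H3, hcom]
  obtain ⟨B, hB⟩ := kan 0 0 (by omega)
    (fun i => if i = 1 then h 0 a0 else h 0 a1) hcomp
  · have e1 : A.d 1 1 ≫ A.d 0 0 = A.d 1 0 ≫ A.d 0 0 :=
      A.dd 0 0 1 (by omega) (by omega)
    have e2 : A.d 1 2 ≫ A.d 0 0 = A.d 1 0 ≫ A.d 0 1 :=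
      A.dd 0 0 2 (by omega) (by omega)
    have hB1 : B ≫ A.d 1 1 = h 0 a0 := by
      have := hB 1 (by omega) (by omega); simpa using this
    have hB2 : B ≫ A.d 1 2 = h 0 a1 := by
      have := hB 2 (by omega) (by omega); simpa using this
    refine ⟨B ≫ A.d 1 0, ?_, ?_⟩
    · calc (B ≫ A.d 1 0) ≫ A.d 0 0 = B ≫ (A.d 1 0 ≫ A.d 0 0) := Category.assoc _ _ _
        _ = B ≫ (A.d 1 1 ≫ A.d 0 0) := by rw [e1]
        _ = (B ≫ A.d 1 1) ≫ A.d 0 0 := (Category.assoc _ _ _).symm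
        _ = h 0 a0 ≫ A.d 0 0 := by rw [hB1]
        _ = a0 := H2 0 a0
    · calc (B ≫ A.d 1 0) ≫ A.d 0 1 = B ≫ (A.d 1 0 ≫ A.d 0 1) := Category.assoc _ _ _
        _ = B ≫ (A.d 1 2 ≫ A.d 0 0) := by rw [e2]
        _ = (B ≫ A.d 1 2) ≫ A.d 0 0 := (Category.assoc _ _ _).symm
        _ = h 0 a1 ≫ A.d 0 0 := by rw [hB2]
        _ = a1 := H2 0 a1

/-- Filling a compatible sphere of dimension `≥ 1` in a contractible Kan
`Hom(P, A)`. -/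
lemma sphereS {X : C} (hc : A.ContractibleAt X) (hk : A.KanAt X) (m : ℕ)
    (a : ℕ → (X ⟶ A.obj (m + 1)))
    (hcom : ∀ i j, i < j → j ≤ m + 2 → a j ≫ A.d m i = a i ≫ A.d m (j - 1)) :
    ∃ b : X ⟶ A.obj (m + 2), ∀ i, i ≤ m + 2 → b ≫ A.d (m + 1) i = a i := by
  obtain ⟨hm, h, H1, H2, H3, H4⟩ := hc
  have kan := hk.2
  have hcomp : ∀ i j, i < j → j ≤ m + 1 + 2 → i ≠ 0 → j ≠ 0 →
      h (m + 1) (a (j - 1)) ≫ A.d (m + 1) i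
        = h (m + 1) (a (i - 1)) ≫ A.d (m + 1) (j - 1) := by
    intro i j hij hj hi0 hj0
    have hi1 : 1 ≤ i := by omega
    have e1 : h (m + 1) (a (j - 1)) ≫ A.d (m + 1) i
        = h m (a (j - 1) ≫ A.d m (i - 1)) := H4 m (a (j - 1)) i hi1 (by omega)
    have e2 : h (m + 1) (a (i - 1)) ≫ A.d (m + 1) (j - 1)
        = h m (a (i - 1) ≫ A.d m (j - 1 - 1)) := H4 m (a (i - 1)) (j - 1) (by omega) (by omega)
    rw [e1, e2, hcom (i - 1) (j - 1) (by omega) (by omega)]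
  obtain ⟨B, hB⟩ := kan (m + 1) 0 (by omega)
    (fun i => h (m + 1) (a (i - 1))) hcomp
  · refine ⟨B ≫ A.d (m + 2) 0, fun i hi => ?_⟩
    have e1 : A.d (m + 2) (i + 1) ≫ A.d (m + 1) 0 = A.d (m + 2) 0 ≫ A.d (m + 1) i :=
      A.dd (m + 1) 0 (i + 1) (by omega) (by omega)
    have hBi : B ≫ A.d (m + 2) (i + 1) = h (m + 1) (a i) := by
      have := hB (i + 1) (by omega) (by omega); simpa using this
    calc (B ≫ A.d (m + 2) 0) ≫ A.d (m + 1) i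
        = B ≫ (A.d (m + 2) 0 ≫ A.d (m + 1) i) := Category.assoc _ _ _
      _ = B ≫ (A.d (m + 2) (i + 1) ≫ A.d (m + 1) 0) := by rw [← e1]
      _ = (B ≫ A.d (m + 2) (i + 1)) ≫ A.d (m + 1) 0 := (Category.assoc _ _ _).symm
      _ = h (m + 1) (a i) ≫ A.d (m + 1) 0 := by rw [hBi]
      _ = a i := H2 (m + 1) (a i)

/-- Exchange helper. -/
lemma keyHelper (M : ℕ) (p : ℕ → (P.obj M ⟶ A.obj (M + 1)))
    (q : ℕ → (P.obj (M + 1) ⟶ A.obj (M + 2)))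
    {a c b d b' d' J1 J2 E : ℕ}
    (h1 : q J1 ≫ A.d (M + 1) b = P.d M b' ≫ p E)
    (h2 : q J2 ≫ A.d (M + 1) d = P.d M d' ≫ p E)
    (h3 : P.d (M + 1) a ≫ P.d M b' = P.d (M + 1) c ≫ P.d M d') :
    (P.d (M + 1) a ≫ q J1) ≫ A.d (M + 1) b = (P.d (M + 1) c ≫ q J2) ≫ A.d (M + 1) d := by
  rw [Category.assoc, Category.assoc, h1, h2, ← Category.assoc, ← Category.assoc, h3]

/-- Construction of the next simplex `H_{K+1}` of the prism at level `M+2`,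
given the previous one. -/
lemma hornNext (gn : ∀ n : ℕ, P.obj n ⟶ A.obj n)
    (hg : ∀ n i, i ≤ n + 1 → gn (n + 1) ≫ A.d n i = P.d n i ≫ gn n)
    (M K : ℕ) (hK : K + 1 ≤ M + 2)
    (hc : A.ContractibleAt (P.obj (M + 2))) (hk : A.KanAt (P.obj (M + 2)))
    (p : ℕ → (P.obj M ⟶ A.obj (M + 1)))
    (q : ℕ → (P.obj (M + 1) ⟶ A.obj (M + 2)))
    (hq2 : q (M + 1) ≫ A.d (M + 1) (M + 2) = gn (M + 1))
    (hq4 : ∀ i, 1 ≤ i → i ≤ M + 1 → q i ≫ A.d (M + 1) i = q (i - 1) ≫ A.d (M + 1) i)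
    (hq3 : ∀ i J, i < J → J ≤ M + 1 → q J ≫ A.d (M + 1) i = P.d M i ≫ p (J - 1))
    (hq5 : ∀ i J, J + 1 < i → i ≤ M + 2 → J ≤ M + 1 →
      q J ≫ A.d (M + 1) i = P.d M (i - 1) ≫ p J)
    (prev : P.obj (M + 2) ⟶ A.obj (M + 3))
    (hLo : ∀ i, i < K → prev ≫ A.d (M + 2) i = P.d (M + 1) i ≫ q (K - 1))
    (hHi : ∀ i, K + 1 < i → i ≤ M + 3 → prev ≫ A.d (M + 2) i = P.d (M + 1) (i - 1) ≫ q K)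
    (hD : prev ≫ A.d (M + 2) K ≫ A.d (M + 1) K = P.d (M + 1) K ≫ q K ≫ A.d (M + 1) K) :
    ∃ x : P.obj (M + 2) ⟶ A.obj (M + 3),
      (∀ i, i < K + 1 → x ≫ A.d (M + 2) i = P.d (M + 1) i ≫ q K) ∧
      (∀ i, K + 2 < i → i ≤ M + 3 → x ≫ A.d (M + 2) i = P.d (M + 1) (i - 1) ≫ q (K + 1)) ∧
      (x ≫ A.d (M + 2) (K + 1) = prev ≫ A.d (M + 2) (K + 1)) ∧
      (K + 1 = M + 2 → x ≫ A.d (M + 2) (M + 3) = gn (M + 2)) := by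
  set aa : ℕ → (P.obj (M + 2) ⟶ A.obj (M + 2)) := fun i =>
    if i < K + 1 then P.d (M + 1) i ≫ q K
    else if i = K + 1 then prev ≫ A.d (M + 2) (K + 1)
    else if i = K + 2 then gn (M + 2)
    else P.d (M + 1) (i - 1) ≫ q (K + 1) with haa
  have compat : ∀ i i', i < i' → i' ≤ M + 3 → (K + 2 ≤ M + 2 → i ≠ K + 2 ∧ i' ≠ K + 2) →
      aa i' ≫ A.d (M + 1) i = aa i ≫ A.d (M + 1) (i' - 1) := by
    intro i i' hii' hle hguard
    simp only [haa]
    rcases Nat.lt_trichotomy i' (K + 1) with h1 | h1 | h1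
    · -- Case 1 : i < i' < K+1
      rw [if_pos h1, if_pos (by omega : i < K + 1)]
      have t1 : q K ≫ A.d (M + 1) i = P.d M i ≫ p (K - 1) :=
        hq3 i K (by omega) (by omega)
      have t2 : q K ≫ A.d (M + 1) (i' - 1) = P.d M (i' - 1) ≫ p (K - 1) :=
        hq3 (i' - 1) K (by omega) (by omega)
      have t3 : P.d (M + 1) i' ≫ P.d M i = P.d (M + 1) i ≫ P.d M (i' - 1) :=
        P.dd M i i' hii' (by omega)
      exact keyHelper P A M p q t1 t2 t3
    · -- Case 2 : i < i' = K+1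
      subst h1
      rw [if_neg (by omega : ¬ (K + 1 < K + 1)), if_pos rfl, if_pos (by omega : i < K + 1)]
      have e : A.d (M + 2) (K + 1) ≫ A.d (M + 1) i = A.d (M + 2) i ≫ A.d (M + 1) K :=
        A.dd (M + 1) i (K + 1) (by omega) (by omega)
      rcases Nat.lt_or_ge i K with h2 | h2
      · -- i < K
        have eLo := hLo i h2
        have e4 : q K ≫ A.d (M + 1) K = q (K - 1) ≫ A.d (M + 1) K :=
          hq4 K (by omega) (by omega)
        calc (prev ≫ A.d (M + 2) (K + 1)) ≫ A.d (M + 1) i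
            = prev ≫ (A.d (M + 2) (K + 1) ≫ A.d (M + 1) i) := Category.assoc _ _ _
          _ = prev ≫ (A.d (M + 2) i ≫ A.d (M + 1) K) := by rw [e]
          _ = (prev ≫ A.d (M + 2) i) ≫ A.d (M + 1) K := (Category.assoc _ _ _).symm
          _ = (P.d (M + 1) i ≫ q (K - 1)) ≫ A.d (M + 1) K := by rw [eLo]
          _ = P.d (M + 1) i ≫ (q (K - 1) ≫ A.d (M + 1) K) := Category.assoc _ _ _
          _ = P.d (M + 1) i ≫ (q K ≫ A.d (M + 1) K) := by rw [e4]
          _ = (P.d (M + 1) i ≫ q K) ≫ A.d (M + 1) K := (Category.assoc _ _ _).symm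
      · -- i = K
        obtain rfl : i = K := by omega
        calc (prev ≫ A.d (M + 2) (i + 1)) ≫ A.d (M + 1) i
            = prev ≫ (A.d (M + 2) (i + 1) ≫ A.d (M + 1) i) := Category.assoc _ _ _
          _ = prev ≫ (A.d (M + 2) i ≫ A.d (M + 1) i) := by rw [e]
          _ = P.d (M + 1) i ≫ q i ≫ A.d (M + 1) i := hD
          _ = (P.d (M + 1) i ≫ q i) ≫ A.d (M + 1) i := (Category.assoc _ _ _).symm
    · -- i' > K + 1
      rcases Nat.lt_trichotomy i' (K + 2) with h2 | h2 | h2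
      · omega
      · -- i' = K + 2 : top face, only in sphere mode
        have hKM2 : K + 2 = M + 3 := by
          rcases Nat.lt_or_ge (M + 2) (K + 2) with h3 | h3
          · omega
          · exact absurd h2 (hguard h3).2
        subst h2
        rw [if_neg (by omega), if_neg (by omega), if_pos rfl]
        obtain rfl : K = M + 1 := by omega
        rcases Nat.lt_or_ge i (M + 2) with h3 | h3
        · -- Case 6a
          rw [if_pos (by omega : i < M + 1 + 1)]
          have e1 : gn (M + 2) ≫ A.d (M + 1) i = P.d (M + 1) i ≫ gn (M + 1) :=
            hg (M + 1) i (by omega)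
          have e2 : q (M + 1) ≫ A.d (M + 1) (M + 1 + 2 - 1) = gn (M + 1) := hq2
          calc gn (M + 2) ≫ A.d (M + 1) i = P.d (M + 1) i ≫ gn (M + 1) := e1
            _ = P.d (M + 1) i ≫ (q (M + 1) ≫ A.d (M + 1) (M + 1 + 2 - 1)) := by rw [e2]
            _ = (P.d (M + 1) i ≫ q (M + 1)) ≫ A.d (M + 1) (M + 1 + 2 - 1) :=
                (Category.assoc _ _ _).symm
        · -- Case 6b : i = M + 2
          obtain rfl : i = M + 2 := by omega
          rw [if_neg (by omega), if_pos (by omega : M + 2 = M + 1 + 1)]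
          have e2 : A.d (M + 2) (M + 3) ≫ A.d (M + 1) (M + 2)
              = A.d (M + 2) (M + 2) ≫ A.d (M + 1) (M + 2) :=
            A.dd (M + 1) (M + 2) (M + 3) (by omega) (by omega)
          have e3 : prev ≫ A.d (M + 2) (M + 3) = P.d (M + 1) (M + 2) ≫ q (M + 1) :=
            hHi (M + 3) (by omega) (by omega)
          have e4 : gn (M + 2) ≫ A.d (M + 1) (M + 2) = P.d (M + 1) (M + 2) ≫ gn (M + 1) :=
            hg (M + 1) (M + 2) (by omega)
          calc gn (M + 2) ≫ A.d (M + 1) (M + 2)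
              = P.d (M + 1) (M + 2) ≫ gn (M + 1) := e4
            _ = P.d (M + 1) (M + 2) ≫ (q (M + 1) ≫ A.d (M + 1) (M + 2)) := by rw [hq2]
            _ = (P.d (M + 1) (M + 2) ≫ q (M + 1)) ≫ A.d (M + 1) (M + 2) :=
                (Category.assoc _ _ _).symm
            _ = (prev ≫ A.d (M + 2) (M + 3)) ≫ A.d (M + 1) (M + 2) := by rw [e3]
            _ = prev ≫ (A.d (M + 2) (M + 3) ≫ A.d (M + 1) (M + 2)) := Category.assoc _ _ _
            _ = prev ≫ (A.d (M + 2) (M + 2) ≫ A.d (M + 1) (M + 2)) := by rw [e2]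
            _ = (prev ≫ A.d (M + 2) (M + 2)) ≫ A.d (M + 1) (M + 2) :=
                (Category.assoc _ _ _).symm
      · -- i' > K + 2 : high region
        rw [if_neg (by omega), if_neg (by omega), if_neg (by omega)]
        rcases Nat.lt_trichotomy i (K + 1) with h3 | h3 | h3
        · -- Case 3
          rw [if_pos h3]
          have t1 : q (K + 1) ≫ A.d (M + 1) i = P.d M i ≫ p K := by
            have := hq3 i (K + 1) (by omega) (by omega); simpa using this
          have t2 : q K ≫ A.d (M + 1) (i' - 1) = P.d M (i' - 1 - 1) ≫ p K :=
            hq5 (i' - 1) K (by omega) (by omega) (by omega)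
          have t3 : P.d (M + 1) (i' - 1) ≫ P.d M i = P.d (M + 1) i ≫ P.d M (i' - 1 - 1) :=
            P.dd M i (i' - 1) (by omega) (by omega)
          exact keyHelper P A M p q t1 t2 t3
        · -- Case 4 : i = K + 1
          subst h3
          rw [if_neg (by omega), if_pos rfl]
          have e : A.d (M + 2) i' ≫ A.d (M + 1) (K + 1)
              = A.d (M + 2) (K + 1) ≫ A.d (M + 1) (i' - 1) :=
            A.dd (M + 1) (K + 1) i' (by omega) (by omega)
          have eHi : prev ≫ A.d (M + 2) i' = P.d (M + 1) (i' - 1) ≫ q K :=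
            hHi i' (by omega) hle
          have e4 : q (K + 1) ≫ A.d (M + 1) (K + 1) = q K ≫ A.d (M + 1) (K + 1) := by
            have := hq4 (K + 1) (by omega) (by omega); simpa using this
          calc (P.d (M + 1) (i' - 1) ≫ q (K + 1)) ≫ A.d (M + 1) (K + 1)
              = P.d (M + 1) (i' - 1) ≫ (q (K + 1) ≫ A.d (M + 1) (K + 1)) := Category.assoc _ _ _
            _ = P.d (M + 1) (i' - 1) ≫ (q K ≫ A.d (M + 1) (K + 1)) := by rw [e4]
            _ = (P.d (M + 1) (i' - 1) ≫ q K) ≫ A.d (M + 1) (K + 1) :=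
                (Category.assoc _ _ _).symm
            _ = (prev ≫ A.d (M + 2) i') ≫ A.d (M + 1) (K + 1) := by rw [eHi]
            _ = prev ≫ (A.d (M + 2) i' ≫ A.d (M + 1) (K + 1)) := Category.assoc _ _ _
            _ = prev ≫ (A.d (M + 2) (K + 1) ≫ A.d (M + 1) (i' - 1)) := by rw [e]
            _ = (prev ≫ A.d (M + 2) (K + 1)) ≫ A.d (M + 1) (i' - 1) :=
                (Category.assoc _ _ _).symm
        · -- Case 5 : K + 1 < i, and i ≠ K + 2
          have hiK2 : i ≠ K + 2 := by
            rcases Nat.lt_or_ge (M + 2) (K + 2) with h4 | h4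
            · omega
            · exact (hguard h4).1
          rw [if_neg (by omega), if_neg (by omega), if_neg hiK2]
          have t1 : q (K + 1) ≫ A.d (M + 1) i = P.d M (i - 1) ≫ p (K + 1) :=
            hq5 i (K + 1) (by omega) (by omega) (by omega)
          have t2 : q (K + 1) ≫ A.d (M + 1) (i' - 1) = P.d M (i' - 1 - 1) ≫ p (K + 1) :=
            hq5 (i' - 1) (K + 1) (by omega) (by omega) (by omega)
          have t3 : P.d (M + 1) (i' - 1) ≫ P.d M (i - 1)
              = P.d (M + 1) (i - 1) ≫ P.d M (i' - 1 - 1) :=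
            P.dd M (i - 1) (i' - 1) (by omega) (by omega)
          exact keyHelper P A M p q t1 t2 t3
  by_cases hs : K + 1 = M + 2
  · -- use sphere filling
    obtain ⟨b, hb⟩ := sphereS A hc hk (M + 1) aa
      (fun i j hij hj => compat i j hij hj (by omega))
    refine ⟨b, ?_, ?_, ?_, ?_⟩
    · intro i hi
      have := hb i (by omega)
      rw [haa] at this
      simpa only [if_pos hi] using this
    · intro i h1 h2
      exfalso; omega
    · have := hb (K + 1) (by omega)
      rw [haa] at this
      simpa only [if_neg (by omega : ¬ (K + 1 < K + 1)), if_pos rfl, if_true] using this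
    · intro _
      have := hb (M + 3) (by omega)
      rw [haa] at this
      simpa only [if_neg (by omega : ¬ (M + 3 < K + 1)),
        if_neg (by omega : ¬ (M + 3 = K + 1)),
        if_pos (by omega : M + 3 = K + 2)] using this
  · -- use horn filling
    have kan := hk.2
    obtain ⟨b, hb⟩ := kan (M + 1) (K + 2) (by omega) aa
      (fun i j hij hj hi hj' => compat i j hij hj (fun _ => ⟨hi, hj'⟩))
    refine ⟨b, ?_, ?_, ?_, fun h => absurd h hs⟩
    · intro i hi
      have := hb i (by omega) (by omega)
      rw [haa] at this
      simpa only [if_pos hi] using this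
    · intro i h1 h2
      have := hb i (by omega) (by omega : i ≠ K + 2)
      rw [haa] at this
      simpa only [if_neg (by omega : ¬ (i < K + 1)), if_neg (by omega : ¬ (i = K + 1)),
        if_neg (by omega : ¬ (i = K + 2))] using this
    · have := hb (K + 1) (by omega) (by omega)
      rw [haa] at this
      simpa only [if_neg (by omega : ¬ (K + 1 < K + 1)), if_pos rfl, if_true] using this

/-- One full step: from two consecutive certified levels to the next level. -/
lemma step_exists (fn gn : ∀ n : ℕ, P.obj n ⟶ A.obj n)
    (hPA : ∀ i : ℕ, A.ContractibleAt (P.obj i) ∧ A.KanAt (P.obj i))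
    (hf : ∀ n i, i ≤ n + 1 → fn (n + 1) ≫ A.d n i = P.d n i ≫ fn n)
    (hg : ∀ n i, i ≤ n + 1 → gn (n + 1) ≫ A.d n i = P.d n i ≫ gn n)
    (M : ℕ)
    (p : ℕ → (P.obj M ⟶ A.obj (M + 1)))
    (q : ℕ → (P.obj (M + 1) ⟶ A.obj (M + 2)))
    (hq1 : q 0 ≫ A.d (M + 1) 0 = fn (M + 1))
    (hq2 : q (M + 1) ≫ A.d (M + 1) (M + 2) = gn (M + 1))
    (hq4 : ∀ i, 1 ≤ i → i ≤ M + 1 → q i ≫ A.d (M + 1) i = q (i - 1) ≫ A.d (M + 1) i)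
    (hq3 : ∀ i J, i < J → J ≤ M + 1 → q J ≫ A.d (M + 1) i = P.d M i ≫ p (J - 1))
    (hq5 : ∀ i J, J + 1 < i → i ≤ M + 2 → J ≤ M + 1 →
      q J ≫ A.d (M + 1) i = P.d M (i - 1) ≫ p J) :
    ∃ r : ℕ → (P.obj (M + 2) ⟶ A.obj (M + 3)),
      (r 0 ≫ A.d (M + 2) 0 = fn (M + 2)) ∧
      (r (M + 2) ≫ A.d (M + 2) (M + 3) = gn (M + 2)) ∧
      (∀ i, 1 ≤ i → i ≤ M + 2 → r i ≫ A.d (M + 2) i = r (i - 1) ≫ A.d (M + 2) i) ∧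
      (∀ i J, i < J → J ≤ M + 2 → r J ≫ A.d (M + 2) i = P.d (M + 1) i ≫ q (J - 1)) ∧
      (∀ i J, J + 1 < i → i ≤ M + 3 → J ≤ M + 2 →
        r J ≫ A.d (M + 2) i = P.d (M + 1) (i - 1) ≫ q J) := by
  obtain ⟨hc, hk⟩ := hPA (M + 2)
  -- the first simplex H_0 : horn with missing face 1
  have kan := hk.2
  have hcomp0 : ∀ i j, i < j → j ≤ M + 1 + 2 → i ≠ 1 → j ≠ 1 →
      (if j = 0 then fn (M + 2) else P.d (M + 1) (j - 1) ≫ q 0) ≫ A.d (M + 1) i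
        = (if i = 0 then fn (M + 2) else P.d (M + 1) (i - 1) ≫ q 0) ≫ A.d (M + 1) (j - 1) := by
    intro i j hij hj hi1 hj1
    rcases eq_or_ne i 0 with hi0 | hi0
    · subst hi0
      rw [if_pos rfl, if_neg (by omega : ¬ (j = 0))]
      have t1 : fn (M + 2) ≫ A.d (M + 1) (j - 1) = P.d (M + 1) (j - 1) ≫ fn (M + 1) :=
        hf (M + 1) (j - 1) (by omega)
      calc (P.d (M + 1) (j - 1) ≫ q 0) ≫ A.d (M + 1) 0
          = P.d (M + 1) (j - 1) ≫ (q 0 ≫ A.d (M + 1) 0) := Category.assoc _ _ _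
        _ = P.d (M + 1) (j - 1) ≫ fn (M + 1) := by rw [hq1]
        _ = fn (M + 2) ≫ A.d (M + 1) (j - 1) := t1.symm
    · -- 2 ≤ i < j
      rw [if_neg hi0, if_neg (by omega : ¬ (j = 0))]
      have t1 : q 0 ≫ A.d (M + 1) i = P.d M (i - 1) ≫ p 0 :=
        hq5 i 0 (by omega) (by omega) (by omega)
      have t2 : q 0 ≫ A.d (M + 1) (j - 1) = P.d M (j - 1 - 1) ≫ p 0 :=
        hq5 (j - 1) 0 (by omega) (by omega) (by omega)
      have t3 : P.d (M + 1) (j - 1) ≫ P.d M (i - 1)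
          = P.d (M + 1) (i - 1) ≫ P.d M (j - 1 - 1) :=
        P.dd M (i - 1) (j - 1) (by omega) (by omega)
      exact keyHelper P A M p q t1 t2 t3
  obtain ⟨x0, hx0⟩ := kan (M + 1) 1 (by omega)
    (fun i => if i = 0 then fn (M + 2) else P.d (M + 1) (i - 1) ≫ q 0) hcomp0
  have x00 : x0 ≫ A.d (M + 2) 0 = fn (M + 2) := by
    have := hx0 0 (by omega) (by omega)
    simpa only [if_pos rfl, if_true] using this
  have x0Hi : ∀ i, 1 < i → i ≤ M + 3 → x0 ≫ A.d (M + 2) i = P.d (M + 1) (i - 1) ≫ q 0 := by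
    intro i h1 h2
    have := hx0 i (by omega) (by omega)
    simpa only [if_neg (by omega : ¬ (i = 0))] using this
  -- build the whole chain of prism simplices
  have chain : ∀ J, J ≤ M + 2 → ∃ H : ℕ → (P.obj (M + 2) ⟶ A.obj (M + 3)),
      (H 0 ≫ A.d (M + 2) 0 = fn (M + 2)) ∧
      (∀ k, k ≤ J → ∀ i, i < k → H k ≫ A.d (M + 2) i = P.d (M + 1) i ≫ q (k - 1)) ∧
      (∀ k, k ≤ J → ∀ i, k + 1 < i → i ≤ M + 3 →
        H k ≫ A.d (M + 2) i = P.d (M + 1) (i - 1) ≫ q k) ∧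
      (∀ k, 1 ≤ k → k ≤ J → H k ≫ A.d (M + 2) k = H (k - 1) ≫ A.d (M + 2) k) ∧
      (J = M + 2 → H (M + 2) ≫ A.d (M + 2) (M + 3) = gn (M + 2)) := by
    intro J
    induction J with
    | zero =>
      intro _
      refine ⟨fun _ => x0, x00, ?_, ?_, ?_, ?_⟩
      · intro k hk i hi; exfalso; omega
      · intro k hk i h1 h2
        have hk0 : k = 0 := by omega
        subst hk0
        exact x0Hi i (by omega) h2
      · intro k h1 h2; exfalso; omega
      · intro h; exfalso; omega
    | succ K ih =>
      intro hK1
      obtain ⟨H, hH0, hHLo, hHHi, hHch, -⟩ := ih (by omega)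
      have hD : H K ≫ A.d (M + 2) K ≫ A.d (M + 1) K
          = P.d (M + 1) K ≫ q K ≫ A.d (M + 1) K := by
        cases K with
        | zero =>
          have t1 : fn (M + 2) ≫ A.d (M + 1) 0 = P.d (M + 1) 0 ≫ fn (M + 1) :=
            hf (M + 1) 0 (by omega)
          calc H 0 ≫ A.d (M + 2) 0 ≫ A.d (M + 1) 0
              = (H 0 ≫ A.d (M + 2) 0) ≫ A.d (M + 1) 0 := (Category.assoc _ _ _).symm
            _ = fn (M + 2) ≫ A.d (M + 1) 0 := by rw [hH0]
            _ = P.d (M + 1) 0 ≫ fn (M + 1) := t1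
            _ = P.d (M + 1) 0 ≫ (q 0 ≫ A.d (M + 1) 0) := by rw [hq1]
        | succ K' =>
          have e1 : H (K' + 1) ≫ A.d (M + 2) (K' + 1) = H K' ≫ A.d (M + 2) (K' + 1) :=
            hHch (K' + 1) (by omega) (by omega)
          have e2 : A.d (M + 2) (K' + 2) ≫ A.d (M + 1) (K' + 1)
              = A.d (M + 2) (K' + 1) ≫ A.d (M + 1) (K' + 1) :=
            A.dd (M + 1) (K' + 1) (K' + 2) (by omega) (by omega)
          have e3 : H K' ≫ A.d (M + 2) (K' + 2) = P.d (M + 1) (K' + 1) ≫ q K' :=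
            hHHi K' (by omega) (K' + 2) (by omega) (by omega)
          have e4 : q (K' + 1) ≫ A.d (M + 1) (K' + 1) = q K' ≫ A.d (M + 1) (K' + 1) :=
            hq4 (K' + 1) (by omega) (by omega)
          calc H (K' + 1) ≫ A.d (M + 2) (K' + 1) ≫ A.d (M + 1) (K' + 1)
              = (H (K' + 1) ≫ A.d (M + 2) (K' + 1)) ≫ A.d (M + 1) (K' + 1) :=
                (Category.assoc _ _ _).symm
            _ = (H K' ≫ A.d (M + 2) (K' + 1)) ≫ A.d (M + 1) (K' + 1) := by rw [e1]
            _ = H K' ≫ (A.d (M + 2) (K' + 1) ≫ A.d (M + 1) (K' + 1)) := Category.assoc _ _ _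
            _ = H K' ≫ (A.d (M + 2) (K' + 2) ≫ A.d (M + 1) (K' + 1)) := by rw [e2]
            _ = (H K' ≫ A.d (M + 2) (K' + 2)) ≫ A.d (M + 1) (K' + 1) :=
                (Category.assoc _ _ _).symm
            _ = (P.d (M + 1) (K' + 1) ≫ q K') ≫ A.d (M + 1) (K' + 1) := by rw [e3]
            _ = P.d (M + 1) (K' + 1) ≫ (q K' ≫ A.d (M + 1) (K' + 1)) := Category.assoc _ _ _
            _ = P.d (M + 1) (K' + 1) ≫ (q (K' + 1) ≫ A.d (M + 1) (K' + 1)) := by rw [e4]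
      obtain ⟨x, hxLo, hxHi, hxDg, hxTop⟩ :=
        hornNext P A gn hg M K hK1 hc hk p q hq2 hq4 hq3 hq5 (H K)
          (fun i hi => hHLo K le_rfl i hi)
          (fun i h1 h2 => hHHi K le_rfl i h1 h2) hD
      refine ⟨fun m => if m = K + 1 then x else H m, ?_, ?_, ?_, ?_, ?_⟩
      · dsimp only
        rw [if_neg (by omega : ¬ ((0 : ℕ) = K + 1))]; exact hH0
      · intro k hk i hi
        dsimp only
        rcases eq_or_ne k (K + 1) with hkK | hkK
        · subst hkK
          rw [if_pos rfl]
          have := hxLo i hi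
          simpa using this
        · rw [if_neg hkK]
          exact hHLo k (by omega) i hi
      · intro k hk i h1 h2
        dsimp only
        rcases eq_or_ne k (K + 1) with hkK | hkK
        · subst hkK
          rw [if_pos rfl]
          exact hxHi i (by omega) h2
        · rw [if_neg hkK]
          exact hHHi k (by omega) i h1 h2
      · intro k h1 h2
        dsimp only
        rcases eq_or_ne k (K + 1) with hkK | hkK
        · subst hkK
          rw [if_pos rfl, if_neg (by omega : ¬ (K + 1 - 1 = K + 1))]
          have e5 : K + 1 - 1 = K := by omega
          rw [e5]
          exact hxDg
        · rw [if_neg hkK, if_neg (by omega : ¬ (k - 1 = K + 1))]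
          exact hHch k h1 (by omega)
      · intro hJ
        dsimp only
        rw [if_pos (by omega : M + 2 = K + 1)]
        exact hxTop hJ
  obtain ⟨H, h0, hLo, hHi, hch, htop⟩ := chain (M + 2) le_rfl
  exact ⟨H, h0, htop rfl, fun i h1 h2 => hch i h1 h2,
    fun i J h1 h2 => hLo J h2 i h1, fun i J h1 h2 h3 => hHi J h3 i h1 h2⟩

/-- The two bottom levels of the homotopy. -/
lemma base_exists (ff : P.pt ⟶ A.pt) (fn gn : ∀ n : ℕ, P.obj n ⟶ A.obj n)
    (hPA : ∀ i : ℕ, A.ContractibleAt (P.obj i) ∧ A.KanAt (P.obj i))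
    (hf0 : fn 0 ≫ A.aug = P.aug ≫ ff)
    (hf : ∀ n i, i ≤ n + 1 → fn (n + 1) ≫ A.d n i = P.d n i ≫ fn n)
    (hg0 : gn 0 ≫ A.aug = P.aug ≫ ff)
    (hg : ∀ n i, i ≤ n + 1 → gn (n + 1) ≫ A.d n i = P.d n i ≫ gn n) :
    ∃ (p : ℕ → (P.obj 0 ⟶ A.obj 1)) (q : ℕ → (P.obj 1 ⟶ A.obj 2)),
      (p 0 ≫ A.d 0 0 = fn 0) ∧ (p 0 ≫ A.d 0 1 = gn 0) ∧
      (q 0 ≫ A.d 1 0 = fn 1) ∧ (q 1 ≫ A.d 1 2 = gn 1) ∧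
      (∀ i, 1 ≤ i → i ≤ 1 → q i ≫ A.d 1 i = q (i - 1) ≫ A.d 1 i) ∧
      (∀ i J, i < J → J ≤ 1 → q J ≫ A.d 1 i = P.d 0 i ≫ p (J - 1)) ∧
      (∀ i J, J + 1 < i → i ≤ 2 → J ≤ 1 → q J ≫ A.d 1 i = P.d 0 (i - 1) ≫ p J) := by
  obtain ⟨hc0, hk0⟩ := hPA 0
  obtain ⟨h00, e1, e2⟩ := sphere0 A hc0 hk0 (fn 0) (gn 0) (by rw [hf0, hg0])
  obtain ⟨hc1, hk1⟩ := hPA 1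
  have kan1 := hk1.2
  have hcomp0 : ∀ i j, i < j → j ≤ 0 + 2 → i ≠ 1 → j ≠ 1 →
      (if j = 0 then fn 1 else P.d 0 1 ≫ h00) ≫ A.d 0 i
        = (if i = 0 then fn 1 else P.d 0 1 ≫ h00) ≫ A.d 0 (j - 1) := by
    intro i j hij hj hi1 hj1
    obtain rfl : i = 0 := by omega
    obtain rfl : j = 2 := by omega
    norm_num
    have t1 : fn 1 ≫ A.d 0 1 = P.d 0 1 ≫ fn 0 := hf 0 1 (by omega)
    rw [e1, t1]
  obtain ⟨x0, hx0⟩ := kan1 0 1 (by omega)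
    (fun i => if i = 0 then fn 1 else P.d 0 1 ≫ h00) hcomp0
  · have x0f0 : x0 ≫ A.d 1 0 = fn 1 := by
      have := hx0 0 (by omega) (by omega)
      simpa using this
    have x0f2 : x0 ≫ A.d 1 2 = P.d 0 1 ≫ h00 := by
      have := hx0 2 (by omega) (by omega)
      simpa using this
    have hcomp1 : ∀ i j, i < j → j ≤ 0 + 2 →
        (if j = 0 then P.d 0 0 ≫ h00 else if j = 1 then x0 ≫ A.d 1 1 else gn 1) ≫ A.d 0 i
          = (if i = 0 then P.d 0 0 ≫ h00 else if i = 1 then x0 ≫ A.d 1 1 else gn 1)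
              ≫ A.d 0 (j - 1) := by
      intro i j hij hj
      have hj' : j = 1 ∨ j = 2 := by omega
      rcases hj' with rfl | rfl
      · -- j = 1, i = 0
        obtain rfl : i = 0 := by omega
        norm_num
        have dd1 : A.d 1 1 ≫ A.d 0 0 = A.d 1 0 ≫ A.d 0 0 := A.dd 0 0 1 (by omega) (by omega)
        have t1 : fn 1 ≫ A.d 0 0 = P.d 0 0 ≫ fn 0 := hf 0 0 (by omega)
        rw [e1, dd1, ← Category.assoc, x0f0, t1]
      · -- j = 2
        rcases eq_or_ne i 0 with hi0 | hi0
        · subst hi0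
          norm_num
          have t1 : gn 1 ≫ A.d 0 0 = P.d 0 0 ≫ gn 0 := hg 0 0 (by omega)
          rw [t1, e2]
        · obtain rfl : i = 1 := by omega
          norm_num
          have dd2 : A.d 1 2 ≫ A.d 0 1 = A.d 1 1 ≫ A.d 0 1 := A.dd 0 1 2 (by omega) (by omega)
          have t1 : gn 1 ≫ A.d 0 1 = P.d 0 1 ≫ gn 0 := hg 0 1 (by omega)
          rw [t1, ← dd2, ← Category.assoc, x0f2, Category.assoc, e2]
    obtain ⟨x1, hx1⟩ := sphereS A hc1 hk1 0
      (fun i => if i = 0 then P.d 0 0 ≫ h00 else if i = 1 then x0 ≫ A.d 1 1 else gn 1) hcomp1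
    · have x1f0 : x1 ≫ A.d 1 0 = P.d 0 0 ≫ h00 := by
        have := hx1 0 (by omega)
        simpa using this
      have x1f1 : x1 ≫ A.d 1 1 = x0 ≫ A.d 1 1 := by
        have := hx1 1 (by omega)
        simpa using this
      have x1f2 : x1 ≫ A.d 1 2 = gn 1 := by
        have := hx1 2 (by omega)
        simpa using this
      refine ⟨fun _ => h00, fun j => if j = 0 then x0 else x1, e1, e2, ?_, ?_, ?_, ?_, ?_⟩
      · simpa using x0f0
      · simpa using x1f2
      · intro i h1 h2
        obtain rfl : i = 1 := by omega
        simpa using x1f1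
      · intro i J h1 h2
        obtain rfl : J = 1 := by omega
        obtain rfl : i = 0 := by omega
        simpa using x1f0
      · intro i J h1 h2 h3
        obtain rfl : J = 0 := by omega
        obtain rfl : i = 2 := by omega
        simpa using x0f2

/-- The data of two consecutive certified levels. -/
def Key (fn gn : ∀ n : ℕ, P.obj n ⟶ A.obj n) (n : ℕ) :=
  {k : (ℕ → (P.obj n ⟶ A.obj (n + 1))) × (ℕ → (P.obj (n + 1) ⟶ A.obj (n + 2))) //
    (k.1 0 ≫ A.d n 0 = fn n ∧ k.1 n ≫ A.d n (n + 1) = gn n ∧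
      (∀ i, 1 ≤ i → i ≤ n → k.1 i ≫ A.d n i = k.1 (i - 1) ≫ A.d n i)) ∧
    (k.2 0 ≫ A.d (n + 1) 0 = fn (n + 1) ∧ k.2 (n + 1) ≫ A.d (n + 1) (n + 2) = gn (n + 1) ∧
      (∀ i, 1 ≤ i → i ≤ n + 1 → k.2 i ≫ A.d (n + 1) i = k.2 (i - 1) ≫ A.d (n + 1) i)) ∧
    (∀ i j, i < j → j ≤ n + 1 → k.2 j ≫ A.d (n + 1) i = P.d n i ≫ k.1 (j - 1)) ∧
    (∀ i j, j + 1 < i → i ≤ n + 2 → j ≤ n + 1 →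
      k.2 j ≫ A.d (n + 1) i = P.d n (i - 1) ≫ k.1 j)}

lemma base_nonempty (ff : P.pt ⟶ A.pt) (fn gn : ∀ n : ℕ, P.obj n ⟶ A.obj n)
    (hPA : ∀ i : ℕ, A.ContractibleAt (P.obj i) ∧ A.KanAt (P.obj i))
    (hf0 : fn 0 ≫ A.aug = P.aug ≫ ff)
    (hf : ∀ n i, i ≤ n + 1 → fn (n + 1) ≫ A.d n i = P.d n i ≫ fn n)
    (hg0 : gn 0 ≫ A.aug = P.aug ≫ ff)
    (hg : ∀ n i, i ≤ n + 1 → gn (n + 1) ≫ A.d n i = P.d n i ≫ gn n) :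
    Nonempty (Key P A fn gn 0) := by
  obtain ⟨p, q, b1, b2, b3, b4, b5, b6, b7⟩ :=
    base_exists P A ff fn gn hPA hf0 hf hg0 hg
  refine ⟨⟨⟨p, q⟩, ⟨b1, b2, ?_⟩, ⟨b3, b4, b5⟩, b6, b7⟩⟩
  intro i h1 h2; exfalso; omega

/-- One certified step. -/
noncomputable def stepK (fn gn : ∀ n : ℕ, P.obj n ⟶ A.obj n)
    (hPA : ∀ i : ℕ, A.ContractibleAt (P.obj i) ∧ A.KanAt (P.obj i))
    (hf : ∀ n i, i ≤ n + 1 → fn (n + 1) ≫ A.d n i = P.d n i ≫ fn n)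
    (hg : ∀ n i, i ≤ n + 1 → gn (n + 1) ≫ A.d n i = P.d n i ≫ gn n)
    (n : ℕ) (k : Key P A fn gn n) : Key P A fn gn (n + 1) :=
  ⟨⟨k.1.2, Classical.choose (step_exists P A fn gn hPA hf hg n k.1.1 k.1.2
      k.2.2.1.1 k.2.2.1.2.1 k.2.2.1.2.2 k.2.2.2.1 k.2.2.2.2)⟩,
    k.2.2.1,
    ⟨(Classical.choose_spec (step_exists P A fn gn hPA hf hg n k.1.1 k.1.2
        k.2.2.1.1 k.2.2.1.2.1 k.2.2.1.2.2 k.2.2.2.1 k.2.2.2.2)).1,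
      (Classical.choose_spec (step_exists P A fn gn hPA hf hg n k.1.1 k.1.2
        k.2.2.1.1 k.2.2.1.2.1 k.2.2.1.2.2 k.2.2.2.1 k.2.2.2.2)).2.1,
      (Classical.choose_spec (step_exists P A fn gn hPA hf hg n k.1.1 k.1.2
        k.2.2.1.1 k.2.2.1.2.1 k.2.2.1.2.2 k.2.2.2.1 k.2.2.2.2)).2.2.1⟩,
    (Classical.choose_spec (step_exists P A fn gn hPA hf hg n k.1.1 k.1.2
        k.2.2.1.1 k.2.2.1.2.1 k.2.2.1.2.2 k.2.2.2.1 k.2.2.2.2)).2.2.2.1,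
    (Classical.choose_spec (step_exists P A fn gn hPA hf hg n k.1.1 k.1.2
        k.2.2.1.1 k.2.2.1.2.1 k.2.2.1.2.2 k.2.2.2.1 k.2.2.2.2)).2.2.2.2⟩

/-- The whole certified tower. -/
noncomputable def FK (ff : P.pt ⟶ A.pt) (fn gn : ∀ n : ℕ, P.obj n ⟶ A.obj n)
    (hPA : ∀ i : ℕ, A.ContractibleAt (P.obj i) ∧ A.KanAt (P.obj i))
    (hf0 : fn 0 ≫ A.aug = P.aug ≫ ff)
    (hf : ∀ n i, i ≤ n + 1 → fn (n + 1) ≫ A.d n i = P.d n i ≫ fn n)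
    (hg0 : gn 0 ≫ A.aug = P.aug ≫ ff)
    (hg : ∀ n i, i ≤ n + 1 → gn (n + 1) ≫ A.d n i = P.d n i ≫ gn n) :
    ∀ n, Key P A fn gn n := fun n =>
  Nat.rec (Classical.choice (base_nonempty P A ff fn gn hPA hf0 hf hg0 hg))
    (fun m ih => stepK P A fn gn hPA hf hg m ih) n

end Aux

/-- Comparison Theorem, uniqueness part.  With `P`, `A` as in the
Comparison Theorem, any two semi-simplicial maps `f, g : P ⟶ A` extending the same
morphism `X ⟶ Y` are simplicially homotopic: there is a family
`hⁿᵢ : Pₙ ⟶ Aₙ₊₁` (for `0 ≤ i ≤ n`) with `∂₀ hⁿ₀ = fₙ`, `∂ₙ₊₁ hⁿₙ = gₙ`,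
`∂ᵢ hⁿⱼ = hⁿ⁻¹ⱼ₋₁ ∂ᵢ` for `i < j`, `∂ᵢ hⁿᵢ = ∂ᵢ hⁿᵢ₋₁` for `i = j ≠ 0`, and
`∂ᵢ hⁿⱼ = hⁿ⁻¹ⱼ ∂ᵢ₋₁` for `i > j + 1`. -/
theorem statement7 (P A : AugSimp C)
    (hPA : ∀ i : ℕ, A.ContractibleAt (P.obj i) ∧ A.KanAt (P.obj i))
    (ff : P.pt ⟶ A.pt)
    (fn gn : ∀ n : ℕ, P.obj n ⟶ A.obj n)
    (hf0 : fn 0 ≫ A.aug = P.aug ≫ ff)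
    (hf : ∀ n i, i ≤ n + 1 → fn (n + 1) ≫ A.d n i = P.d n i ≫ fn n)
    (hg0 : gn 0 ≫ A.aug = P.aug ≫ ff)
    (hg : ∀ n i, i ≤ n + 1 → gn (n + 1) ≫ A.d n i = P.d n i ≫ gn n) :
    ∃ h : (n i : ℕ) → (P.obj n ⟶ A.obj (n + 1)),
      (∀ n, h n 0 ≫ A.d n 0 = fn n) ∧
      (∀ n, h n n ≫ A.d n (n + 1) = gn n) ∧
      (∀ n i j, i < j → j ≤ n + 1 →
        h (n + 1) j ≫ A.d (n + 1) i = P.d n i ≫ h n (j - 1)) ∧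
      (∀ n i, 1 ≤ i → i ≤ n →
        h n i ≫ A.d n i = h n (i - 1) ≫ A.d n i) ∧
      (∀ n i j, j + 1 < i → i ≤ n + 2 → j ≤ n + 1 →
        h (n + 1) j ≫ A.d (n + 1) i = P.d n (i - 1) ≫ h n j) := by
  refine ⟨fun n => (FK P A ff fn gn hPA hf0 hf hg0 hg n).1.1, ?_, ?_, ?_, ?_, ?_⟩
  · intro n
    exact (FK P A ff fn gn hPA hf0 hf hg0 hg n).2.1.1
  · intro n
    exact (FK P A ff fn gn hPA hf0 hf hg0 hg n).2.1.2.1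
  · intro n i j h1 h2
    exact (FK P A ff fn gn hPA hf0 hf hg0 hg n).2.2.2.1 i j h1 h2
  · intro n i h1 h2
    exact (FK P A ff fn gn hPA hf0 hf hg0 hg n).2.1.2.2 i h1 h2
  · intro n i j h1 h2 h3
    exact (FK P A ff fn gn hPA hf0 hf hg0 hg n).2.2.2.2 i j h1 h2 h3

end Statement7
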